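/- Let h be an integer such that 56 divides h(h-1). Then there exist a sign ε ∈ {1, -1} and an integer n such that, as rational numbers, h(h-1)/112 + (2h-1)/32 = ε/32 + n. In other words, h(h-1)/112 + (2h-1)/32 ≡ ±1/32 (mod ℤ). -/

import Mathlib

theorem stmt_0 (h : ℤ) (hdvd : (56 : ℤ) ∣ h * (h - 1)) :
    ∃ ε : ℤ, (ε = 1 ∨ ε = -1) ∧ ∃ n : ℤ,
      ((h : ℚ) * (h - 1)) / 112 + (2 * h - 1) / 32 = ε / 32 + n := by
  obtain ⟨k, hk⟩ := hdvd
  have key : ∀ a b : ZMod 16, 8 * a = b * (b - 1) → b * b = 0 ∨ b * b = 1 := by decide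
  have hz : (8 : ZMod 16) * (k : ℤ) = (h : ℤ) * ((h : ℤ) - 1) := by
    have := congrArg (fun x : ℤ => (x : ZMod 16)) hk
    push_cast at this
    have h56 : (56 : ZMod 16) = 8 := by decide
    rw [h56] at this
    exact this.symm
  rcases key _ _ hz with h0 | h1
  · -- h² ≡ 0 mod 16 : 16 ∣ 8k + h
    have hdvd16 : (16 : ℤ) ∣ 8 * k + h := by
      have : ((8 * k + h : ℤ) : ZMod 16) = 0 := by
        push_cast
        calc (8 : ZMod 16) * k + h = h * (h - 1) + h := by rw [hz]
        _ = h * h := by ring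
        _ = 0 := h0
      exact (ZMod.intCast_zmod_eq_zero_iff_dvd _ _).mp this
    obtain ⟨m, hm⟩ := hdvd16
    refine ⟨-1, Or.inr rfl, m, ?_⟩
    have hkq : (h : ℚ) * ((h : ℚ) - 1) = 56 * k := by exact_mod_cast hk
    have hmq : 8 * (k : ℚ) + h = 16 * m := by exact_mod_cast hm
    field_simp
    push_cast
    linarith [hkq, hmq]
  · have hdvd16 : (16 : ℤ) ∣ 8 * k + h - 1 := by
      have : ((8 * k + h - 1 : ℤ) : ZMod 16) = 0 := by
        push_cast
        calc (8 : ZMod 16) * k + h - 1 = h * (h - 1) + h - 1 := by rw [hz]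
        _ = h * h - 1 := by ring
        _ = 0 := by rw [h1]; ring
      exact (ZMod.intCast_zmod_eq_zero_iff_dvd _ _).mp this
    obtain ⟨m, hm⟩ := hdvd16
    refine ⟨1, Or.inl rfl, m, ?_⟩
    have hkq : (h : ℚ) * ((h : ℚ) - 1) = 56 * k := by exact_mod_cast hk
    have hmq : 8 * (k : ℚ) + h - 1 = 16 * m := by exact_mod_cast hm
    field_simp
    push_cast
    linarith [hkq, hmq]
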